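/- Fix a positive integer m, and let λ = (λ₁,…,λₙ) and μ = (μ₁,…,μₙ) be two partitions with |λ|, |μ| ≤ m and λ ≠ μ. Assume κ ≥ 0 and a < −2(m + κ(n−1)) + 1. Then there exists a polynomial p ∈ ℝ[x₁,…,xₙ] invariant under all permutations of the variables and under all sign changes xᵢ ↦ −xᵢ such that p(λ + ρ^B) ≠ p(μ + ρ^B). -/

import Mathlib

open MvPolynomial MeasureTheory Filter
open scoped BigOperators Classical

namespace MVB

noncomputable section

/-! ### Partitions and eigenvalues -/

def IsPartition (n : ℕ) (l : Fin n → ℕ) : Prop := ∀ i j : Fin n, i ≤ j → l j ≤ l i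

def wt (n : ℕ) (l : Fin n → ℕ) : ℕ := ∑ i, l i

/-- `μ ⊂ λ`. -/
def SubPart (n : ℕ) (m l : Fin n → ℕ) : Prop := (∀ i, m i ≤ l i) ∧ m ≠ l

/-- `d_ν = Σᵢ νᵢ(νᵢ − 1 + 2κ(n−i))` (1-indexed `i`). -/
def dEig (n : ℕ) (κ : ℝ) (l : Fin n → ℕ) : ℝ :=
  ∑ i : Fin n, (l i : ℝ) * ((l i : ℝ) - 1 + 2 * κ * ((n : ℝ) - 1 - ((i : ℕ) : ℝ)))

def eEig (n : ℕ) (κ a : ℝ) (l : Fin n → ℕ) : ℝ := dEig n κ l + a * (wt n l : ℝ)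

/-- strict dominance order on partitions of equal weight. -/
def DomLt (n : ℕ) (m l : Fin n → ℕ) : Prop :=
  wt n m = wt n l ∧
  (∀ k : Fin n, ∑ i ∈ Finset.univ.filter (fun i => i ≤ k), m i
      ≤ ∑ i ∈ Finset.univ.filter (fun i => i ≤ k), l i) ∧ m ≠ l

def boundedFuns (n N : ℕ) : Finset (Fin n → ℕ) :=
  (Finset.univ : Finset (Fin n → Fin (N+1))).image (fun f i => (f i : ℕ))

/-- the finset of partitions `μ ⊂ λ`. -/
def strictSubs (n : ℕ) (l : Fin n → ℕ) : Finset (Fin n → ℕ) :=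
  (boundedFuns n (wt n l)).filter (fun m => IsPartition n m ∧ SubPart n m l)

/-- the finset of partitions strictly dominated by `λ`. -/
def domLts (n : ℕ) (l : Fin n → ℕ) : Finset (Fin n → ℕ) :=
  (boundedFuns n (wt n l)).filter (fun m => IsPartition n m ∧ DomLt n m l)

/-- the finset of partitions `μ ⊆ λ`. -/
def subsetsOf (n : ℕ) (l : Fin n → ℕ) : Finset (Fin n → ℕ) :=
  (boundedFuns n (wt n l)).filter (fun m => IsPartition n m ∧ ∀ i, m i ≤ l i)

/-! ### Polynomials, differential operators, Jack and Bessel polynomials -/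

def rc (𝕜 : Type*) [RCLike 𝕜] : ℝ → 𝕜 := algebraMap ℝ 𝕜

/-- the monomial symmetric polynomial `m_λ`. -/
def mSymm (n : ℕ) (𝕜 : Type*) [RCLike 𝕜] (l : Fin n → ℕ) : MvPolynomial (Fin n) 𝕜 :=
  ∑ α ∈ (Finset.univ : Finset (Equiv.Perm (Fin n))).image
      (fun σ => l ∘ (σ : Fin n → Fin n)),
    monomial (Finsupp.equivFunOnFinite.symm α) (1 : 𝕜)

/-- evaluation of a polynomial at a real point. -/
def evalr (n : ℕ) (𝕜 : Type*) [RCLike 𝕜] (p : MvPolynomial (Fin n) 𝕜) (x : Fin n → ℝ) : 𝕜 :=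
  eval (fun i => rc 𝕜 (x i)) p

/-- partial derivative `∂/∂xᵢ`. -/
def pd (n : ℕ) (𝕜 : Type*) [RCLike 𝕜] (i : Fin n) (f : (Fin n → ℝ) → 𝕜) : (Fin n → ℝ) → 𝕜 :=
  fun x => fderiv ℝ f x (Pi.single i 1)

def Distinct (n : ℕ) : Set (Fin n → ℝ) := {x | ∀ i j : Fin n, i ≠ j → x i ≠ x j}

def DistinctNZ (n : ℕ) : Set (Fin n → ℝ) :=
  {x | (∀ i, x i ≠ 0) ∧ ∀ i j : Fin n, i ≠ j → x i ≠ x j}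

/-- `D₂ = Σᵢ xᵢ²∂ᵢ² + 2κ Σ_{i≠j} (xᵢ²/(xᵢ−xⱼ)) ∂ᵢ`. -/
def D2op (n : ℕ) (𝕜 : Type*) [RCLike 𝕜] (κ : ℝ) (f : (Fin n → ℝ) → 𝕜) : (Fin n → ℝ) → 𝕜 :=
  fun x => ∑ i, rc 𝕜 ((x i)^2) * pd n 𝕜 i (pd n 𝕜 i f) x
    + 2 * rc 𝕜 κ * ∑ i, ∑ j ∈ Finset.univ.erase i,
        rc 𝕜 ((x i)^2 / (x i - x j)) * pd n 𝕜 i f x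

/-- `D^B = Σᵢ xᵢ²∂ᵢ² + Σᵢ (a xᵢ + 2) ∂ᵢ + 2κ Σ_{i≠j} (xᵢ²/(xᵢ−xⱼ)) ∂ᵢ`. -/
def DBop (n : ℕ) (𝕜 : Type*) [RCLike 𝕜] (κ a : ℝ) (f : (Fin n → ℝ) → 𝕜) : (Fin n → ℝ) → 𝕜 :=
  fun x => D2op n 𝕜 κ f x + ∑ i, rc 𝕜 (a * x i + 2) * pd n 𝕜 i f x

/-- `P` is a family of (monic) Jack polynomials with parameter `κ`. -/
def IsJackFamily (n : ℕ) (𝕜 : Type*) [RCLike 𝕜] (κ : ℝ)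
    (P : (Fin n → ℕ) → MvPolynomial (Fin n) 𝕜) : Prop :=
  ∀ l : Fin n → ℕ, IsPartition n l →
    (P l).IsSymmetric ∧
    (∃ c : (Fin n → ℕ) → 𝕜,
      P l = mSymm n 𝕜 l + ∑ m ∈ domLts n l, c m • mSymm n 𝕜 m) ∧
    (∀ x ∈ Distinct n, D2op n 𝕜 κ (evalr n 𝕜 (P l)) x = rc 𝕜 (dEig n κ l) * evalr n 𝕜 (P l) x)

/-- `Y` is the multivariable Bessel polynomial attached to the partition `l`. -/
def IsBessel (n : ℕ) (𝕜 : Type*) [RCLike 𝕜] (κ a : ℝ)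
    (P : (Fin n → ℕ) → MvPolynomial (Fin n) 𝕜)
    (l : Fin n → ℕ) (Y : MvPolynomial (Fin n) 𝕜) : Prop :=
  Y.IsSymmetric ∧
  (∃ u : (Fin n → ℕ) → 𝕜, Y = P l + ∑ m ∈ strictSubs n l, u m • P m) ∧
  (∀ x ∈ Distinct n, DBop n 𝕜 κ a (evalr n 𝕜 Y) x = rc 𝕜 (eEig n κ a l) * evalr n 𝕜 Y x)

/-- `B` is the family of generalised binomial coefficients of the Jack family `P`. -/
def IsBinomFamily (n : ℕ) (𝕜 : Type*) [RCLike 𝕜]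
    (P : (Fin n → ℕ) → MvPolynomial (Fin n) 𝕜)
    (B : (Fin n → ℕ) → (Fin n → ℕ) → 𝕜) : Prop :=
  ∀ l : Fin n → ℕ, IsPartition n l → ∀ x : Fin n → ℝ,
    evalr n 𝕜 (P l) (fun i => x i + 1) / evalr n 𝕜 (P l) (fun _ => 1)
      = ∑ m ∈ subsetsOf n l, B l m * evalr n 𝕜 (P m) x / evalr n 𝕜 (P m) (fun _ => 1)

/-! ### Chains (standard tableaux of skew shape) -/

def IsChainLM (n : ℕ) (l m : Fin n → ℕ) (r : ℕ) (c : Fin (r+1) → Fin n → ℕ) : Prop :=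
  c 0 = l ∧ c (Fin.last r) = m ∧
  ∀ k : Fin r, IsPartition n (c k.succ) ∧ SubPart n (c k.succ) (c k.castSucc) ∧
    wt n (c k.castSucc) = wt n (c k.succ) + 1

def chainsLM (n : ℕ) (l m : Fin n → ℕ) (r : ℕ) : Finset (Fin (r+1) → Fin n → ℕ) :=
  ((Finset.univ : Finset (Fin (r+1) → Fin n → Fin (wt n l + 1))).image
    (fun c k i => (c k i : ℕ))).filter (IsChainLM n l m r)

/-- the coefficients in the Jack expansion of the Bessel polynomials. -/
def uCoeff (n : ℕ) (κ a : ℝ) (P : (Fin n → ℕ) → MvPolynomial (Fin n) ℝ)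
    (B : (Fin n → ℕ) → (Fin n → ℕ) → ℝ) (l m : Fin n → ℕ) : ℝ :=
  2 ^ (wt n l - wt n m) *
    ∑ c ∈ chainsLM n l m (wt n l - wt n m),
      ∏ k : Fin (wt n l - wt n m),
        evalr n ℝ (P (c k.castSucc)) (fun _ => 1) / evalr n ℝ (P (c k.succ)) (fun _ => 1)
          * B (c k.castSucc) (c k.succ)
          / (a * (((k : ℕ) : ℝ) + 1) + dEig n κ l - dEig n κ (c k.succ))

/-! ### Hypergeometric data -/

def ascPoch (β : ℝ) (m : ℕ) : ℝ := ∏ j ∈ Finset.range m, (β + (j : ℝ))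

/-- generalised Pochhammer symbol `[α]^{(κ)}_λ`. -/
def genPoch (n : ℕ) (κ α : ℝ) (l : Fin n → ℕ) : ℝ :=
  ∏ i : Fin n, ascPoch (α - κ * ((i : ℕ) : ℝ)) (l i)

def conjPart (n : ℕ) (l : Fin n → ℕ) (j : ℕ) : ℕ :=
  (Finset.univ.filter (fun i => j ≤ l i)).card

/-- `h_λ = ∏_{(i,j)∈λ} (λᵢ − j + κ(λ′ⱼ − i) + 1)`. -/
def hJack (n : ℕ) (κ : ℝ) (l : Fin n → ℕ) : ℝ :=
  ∏ i : Fin n, ∏ j ∈ Finset.range (l i),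
    ((l i : ℝ) - ((j : ℝ) + 1) + κ * ((conjPart n l (j+1) : ℝ) - (((i : ℕ) : ℝ) + 1)) + 1)

/-! ### BC_n Jacobi polynomials -/

def coth (z : ℝ) : ℝ := Real.cosh z / Real.sinh z

def BCdomain (n : ℕ) : Set (Fin n → ℝ) :=
  {z | (∀ i, z i ≠ 0) ∧ ∀ i j : Fin n, i ≠ j → z i ≠ z j ∧ z i ≠ - z j}

def tmap (n : ℕ) (z : Fin n → ℝ) : Fin n → ℝ := fun i => -(Real.sinh (z i / 2))^2

def DBC (n : ℕ) (k1 k2 k3 : ℝ) (f : (Fin n → ℝ) → ℝ) : (Fin n → ℝ) → ℝ :=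
  fun z => ∑ i, pd n ℝ i (pd n ℝ i f) z
    + ∑ i, (k1 * coth (z i / 2) + 2 * k2 * coth (z i)) * pd n ℝ i f z
    + k3 * ∑ i, ∑ j ∈ Finset.univ.filter (fun j => i < j),
        (coth ((z i - z j)/2) * (pd n ℝ i f z - pd n ℝ j f z)
          + coth ((z i + z j)/2) * (pd n ℝ i f z + pd n ℝ j f z))

/-- `F` is the `BC_n` Jacobi polynomial attached to `l`, as a function of `z`. -/
def IsBCJacobi (n : ℕ) (k1 k2 k3 : ℝ) (P : (Fin n → ℕ) → MvPolynomial (Fin n) ℝ)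
    (l : Fin n → ℕ) (F : (Fin n → ℝ) → ℝ) : Prop :=
  (∃ w : (Fin n → ℕ) → ℝ, ∀ z : Fin n → ℝ,
    F z = (-4 : ℝ)^(wt n l) * eval (tmap n z) (P l)
      + ∑ m ∈ strictSubs n l, w m * eval (tmap n z) (P m)) ∧
  (∃ E : ℝ, ∀ z ∈ BCdomain n, DBC n k1 k2 k3 F z = E * F z)

/-! ### The higher order operators `D^B_d` -/

def DBsigned (n : ℕ) (𝕜 : Type*) [RCLike 𝕜] (κ a : ℝ) :
    ℕ → Bool → Fin n → ((Fin n → ℝ) → 𝕜) → ((Fin n → ℝ) → 𝕜)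
  | 0, _, _, f => f
  | (d+1), e, i, f => fun x =>
      (if e then (1 : 𝕜) else -1) *
        ( rc 𝕜 (x i) * pd n 𝕜 i (DBsigned n 𝕜 κ a d e i f) x
          + rc 𝕜 ((a - 1 + 2 / x i) / 2) *
              (DBsigned n 𝕜 κ a d e i f x - DBsigned n 𝕜 κ a d (!e) i f x)
          + rc 𝕜 (κ / 2) * ∑ j ∈ Finset.univ.erase i,
              rc 𝕜 ((x i + x j) / (x i - x j)) *
                (DBsigned n 𝕜 κ a d e i f x - DBsigned n 𝕜 κ a d e j f x)
          + rc 𝕜 (κ / 2) * ∑ j ∈ Finset.univ.erase i,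
              (DBsigned n 𝕜 κ a d e i f x - DBsigned n 𝕜 κ a d (!e) j f x) )

def DBd (n : ℕ) (𝕜 : Type*) [RCLike 𝕜] (κ a : ℝ) (d : ℕ)
    (f : (Fin n → ℝ) → 𝕜) : (Fin n → ℝ) → 𝕜 :=
  fun x => (1/2 : 𝕜) *
    (∑ i, DBsigned n 𝕜 κ a (2*d) true i f x + ∑ i, DBsigned n 𝕜 κ a (2*d) false i f x)

/-- `T` represents the operator `D^B_d` as a map on symmetric polynomials. -/
def Represents (n : ℕ) (𝕜 : Type*) [RCLike 𝕜] (κ a : ℝ) (d : ℕ)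
    (T : MvPolynomial (Fin n) 𝕜 → MvPolynomial (Fin n) 𝕜) : Prop :=
  ∀ p : MvPolynomial (Fin n) 𝕜, p.IsSymmetric →
    (T p).IsSymmetric ∧
    ∀ x ∈ DistinctNZ n, DBd n 𝕜 κ a d (evalr n 𝕜 p) x = evalr n 𝕜 (T p) x

def opMono (n : ℕ) (𝕜 : Type*) [RCLike 𝕜]
    (T : Fin n → (MvPolynomial (Fin n) 𝕜 → MvPolynomial (Fin n) 𝕜))
    (m : Fin n → ℕ) : MvPolynomial (Fin n) 𝕜 → MvPolynomial (Fin n) 𝕜 :=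
  (List.finRange n).foldr (fun i g => (T i)^[m i] ∘ g) id

/-- `Q(T₁,…,Tₙ)` applied to `f`. -/
def opEval (n : ℕ) (𝕜 : Type*) [RCLike 𝕜]
    (T : Fin n → (MvPolynomial (Fin n) 𝕜 → MvPolynomial (Fin n) 𝕜))
    (Q : MvPolynomial (Fin n) 𝕜) (f : MvPolynomial (Fin n) 𝕜) : MvPolynomial (Fin n) 𝕜 :=
  ∑ m ∈ Q.support, Q.coeff m • opMono n 𝕜 T (fun i => m i) f

/-- invariance under sign changes of the variables. -/
def SignInv (n : ℕ) (𝕜 : Type*) [RCLike 𝕜] (p : MvPolynomial (Fin n) 𝕜) : Prop :=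
  ∀ ε : Fin n → 𝕜, (∀ i, ε i = 1 ∨ ε i = -1) →
    ∀ x : Fin n → 𝕜, eval (fun i => ε i * x i) p = eval x p

/-! ### `ρ^B` and the `Δ̂` factors -/

def rhoB (n : ℕ) (κ a : ℝ) : Fin n → ℝ :=
  fun i => κ * ((n : ℝ) - 1 - ((i : ℕ) : ℝ)) + (a - 1) / 2

/-- the vector `λ + ρ^B`. -/
def shiftl (n : ℕ) (κ a : ℝ) (l : Fin n → ℕ) : Fin n → ℝ :=
  fun i => (l i : ℝ) + rhoB n κ a i

def dvP (κ z : ℝ) : ℝ := Real.Gamma (κ + z) / Real.Gamma z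
def dvM (κ z : ℝ) : ℝ := Real.Gamma (-κ + z + 1) / Real.Gamma (z + 1)
def dwP (a z : ℝ) : ℝ := Real.Gamma ((a - 1) / 2 + z) / Real.Gamma (2 * z)
def dwM (a z : ℝ) : ℝ := Real.Gamma (-((a - 1) / 2) + z + 1) / Real.Gamma (2 * z + 1)

def DeltaP (n : ℕ) (κ a : ℝ) (z : Fin n → ℝ) : ℝ :=
  (∏ i : Fin n, ∏ j ∈ Finset.univ.filter (fun j => i < j),
      dvP κ (z i - z j) * dvP κ (z i + z j)) * ∏ i, dwP a (z i)

def DeltaM (n : ℕ) (κ a : ℝ) (z : Fin n → ℝ) : ℝ :=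
  (∏ i : Fin n, ∏ j ∈ Finset.univ.filter (fun j => i < j),
      dvM κ (z i - z j) * dvM κ (z i + z j)) * ∏ i, dwM a (z i)

/-- `t` is not a pole of the Gamma function. -/
def GoodArg (t : ℝ) : Prop := ∀ k : ℕ, t ≠ -(k : ℝ)

def GoodDelta (n : ℕ) (κ a : ℝ) (z : Fin n → ℝ) : Prop :=
  (∀ i j : Fin n, i < j →
    GoodArg (κ + (z i - z j)) ∧ GoodArg (z i - z j) ∧
    GoodArg (κ + (z i + z j)) ∧ GoodArg (z i + z j)) ∧
  ∀ i, GoodArg ((a - 1) / 2 + z i) ∧ GoodArg (2 * z i)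

def vB (κ z : ℝ) : ℝ := (κ + z) / z
def wB (a z : ℝ) : ℝ := ((a - 1) / 2 + z) / (2 * z * (2 * z + 1))

/-- renormalised Bessel polynomials `Ỹ_λ`, as functions, given the family `B` of
monic Bessel polynomials. -/
def Ytil (n : ℕ) (κ a : ℝ) (B : (Fin n → ℕ) → MvPolynomial (Fin n) ℝ)
    (m : Fin n → ℕ) (x : Fin n → ℝ) : ℝ :=
  (1 / 2 ^ (wt n m)) * (DeltaP n κ a (rhoB n κ a) / DeltaP n κ a (shiftl n κ a m))
    * MvPolynomial.eval x (B m)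

def addE (n : ℕ) (i : Fin n) (l : Fin n → ℕ) : Fin n → ℕ := Function.update l i (l i + 1)
def subE (n : ℕ) (i : Fin n) (l : Fin n → ℕ) : Fin n → ℕ := Function.update l i (l i - 1)

def VhatP (n : ℕ) (κ a : ℝ) (i : Fin n) (z : Fin n → ℝ) : ℝ :=
  wB a (z i) * ∏ j ∈ Finset.univ.erase i, vB κ (z i + z j) * vB κ (z i - z j)

def VhatM (n : ℕ) (κ a : ℝ) (i : Fin n) (z : Fin n → ℝ) : ℝ :=
  wB a (-(z i)) * ∏ j ∈ Finset.univ.erase i, vB κ (-(z i) + z j) * vB κ (-(z i) - z j)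

/-! ### Data for the general Pieri formulae -/

def zeta (n : ℕ) (t : Fin n → Fin 3) : Fin n → ℤ := fun i => (t i : ℤ) - 1

def suppZ (n : ℕ) (ν : Fin n → ℤ) : Finset (Fin n) := Finset.univ.filter (fun i => ν i ≠ 0)

def EBr (n : ℕ) (r : ℕ) (x : Fin n → ℝ) : ℝ :=
  ((-1 : ℝ)^(r+1) / 2^r) *
    ∑ I ∈ Finset.powersetCard r (Finset.univ : Finset (Fin n)), ∏ i ∈ I, x i

def VhatSet (n : ℕ) (κ a : ℝ) (ν : Fin n → ℤ) (J : Finset (Fin n)) (z : Fin n → ℝ) : ℝ :=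
  (∏ i ∈ suppZ n ν, wB a ((ν i : ℝ) * z i))
  * (∏ i ∈ suppZ n ν, ∏ i' ∈ (suppZ n ν).filter (fun i' => i < i'),
      vB κ ((ν i : ℝ) * z i + (ν i' : ℝ) * z i')
        * vB κ ((ν i : ℝ) * z i + (ν i' : ℝ) * z i' + 1))
  * ∏ i ∈ suppZ n ν, ∏ j ∈ J,
      vB κ ((ν i : ℝ) * z i + z j) * vB κ ((ν i : ℝ) * z i - z j)

def UhatSet (n : ℕ) (κ a : ℝ) (J : Finset (Fin n)) (p : ℕ) (z : Fin n → ℝ) : ℝ :=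
  (-1 : ℝ)^p * ∑ t : Fin n → Fin 3,
    (if suppZ n (zeta n t) ⊆ J ∧ (suppZ n (zeta n t)).card = p then
      (∏ k ∈ suppZ n (zeta n t), wB a ((zeta n t k : ℝ) * z k))
      * (∏ k ∈ suppZ n (zeta n t), ∏ k' ∈ (suppZ n (zeta n t)).filter (fun k' => k < k'),
          vB κ ((zeta n t k : ℝ) * z k + (zeta n t k' : ℝ) * z k')
            * vB κ (-((zeta n t k : ℝ) * z k) - (zeta n t k' : ℝ) * z k' - 1))
      * ∏ k ∈ suppZ n (zeta n t), ∏ j ∈ J \ suppZ n (zeta n t),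
          vB κ ((zeta n t k : ℝ) * z k + z j) * vB κ ((zeta n t k : ℝ) * z k - z j)
    else 0)

def addZ (n : ℕ) (l : Fin n → ℕ) (ν : Fin n → ℤ) : Fin n → ℕ :=
  fun i => ((l i : ℤ) + ν i).toNat

/-! ### The measure -/

def WB (n : ℕ) (κ a : ℝ) (x : Fin n → ℝ) : ℝ :=
  (∏ i, (x i) ^ (a - 2) * Real.exp (-2 / x i)) *
    ∏ i : Fin n, ∏ j ∈ Finset.univ.filter (fun j => i < j), |x i - x j| ^ (2 * κ)

def muB (n : ℕ) (κ a : ℝ) : Measure (Fin n → ℝ) :=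
  (volume.restrict {x : Fin n → ℝ | ∀ i, 0 < x i}).withDensity
    (fun x => ENNReal.ofReal (WB n κ a x))

end

theorem stmt9 (n M : ℕ) (hM : 1 ≤ M) (κ a : ℝ) (hκ : 0 ≤ κ)
    (ha : a < -2 * ((M : ℝ) + κ * ((n : ℝ) - 1)) + 1)
    (l m : Fin n → ℕ) (hl : IsPartition n l) (hm : IsPartition n m)
    (hlM : wt n l ≤ M) (hmM : wt n m ≤ M) (hne : l ≠ m) :
    ∃ p : MvPolynomial (Fin n) ℝ, p.IsSymmetric ∧ SignInv n ℝ p ∧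
      MvPolynomial.eval (shiftl n κ a l) p ≠ MvPolynomial.eval (shiftl n κ a m) p := by
  classical
  -- all components of `shiftl` are negative
  have hneg : ∀ w : Fin n → ℕ, wt n w ≤ M → ∀ i, shiftl n κ a w i < 0 := by
    intro w hwM i
    have h1 : (w i : ℝ) ≤ (M : ℝ) := by
      have h := Finset.single_le_sum (f := fun j => w j)
        (fun _ _ => Nat.zero_le _) (Finset.mem_univ i)
      exact_mod_cast h.trans hwM
    have h2 : κ * ((n : ℝ) - 1 - ((i : ℕ) : ℝ)) ≤ κ * ((n : ℝ) - 1) := by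
      apply mul_le_mul_of_nonneg_left _ hκ
      have : (0 : ℝ) ≤ ((i : ℕ) : ℝ) := Nat.cast_nonneg _
      linarith
    simp only [shiftl, rhoB]
    linarith
  -- `shiftl` is antitone
  have hanti : ∀ w : Fin n → ℕ, IsPartition n w →
      ∀ i j : Fin n, i ≤ j → shiftl n κ a w j ≤ shiftl n κ a w i := by
    intro w hw i j hij
    have h1 : (w j : ℝ) ≤ (w i : ℝ) := Nat.cast_le.2 (hw i j hij)
    have h2 : κ * ((n : ℝ) - 1 - ((j : ℕ) : ℝ)) ≤ κ * ((n : ℝ) - 1 - ((i : ℕ) : ℝ)) := by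
      apply mul_le_mul_of_nonneg_left _ hκ
      have hij' : ((i : ℕ) : ℝ) ≤ ((j : ℕ) : ℝ) := Nat.cast_le.2 hij
      linarith
    simp only [shiftl, rhoB]
    linarith
  set u : Fin n → ℝ := shiftl n κ a l with hu
  set v : Fin n → ℝ := shiftl n κ a m with hv
  -- multisets of squares differ
  have hST : (↑(List.ofFn (fun i => u i ^ 2)) : Multiset ℝ)
      ≠ (↑(List.ofFn (fun i => v i ^ 2)) : Multiset ℝ) := by
    intro hEq
    apply hne
    have hperm : (List.ofFn (fun i => u i ^ 2)).Perm (List.ofFn (fun i => v i ^ 2)) :=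
      Multiset.coe_eq_coe.mp hEq
    have hperm2 : (List.ofFn u).Perm (List.ofFn v) := by
      have h := hperm.map (fun s => -Real.sqrt s)
      rw [List.map_ofFn, List.map_ofFn] at h
      have hcu : ((fun s => -Real.sqrt s) ∘ fun i => u i ^ 2) = u := by
        funext i
        simp only [Function.comp_apply, Real.sqrt_sq_eq_abs,
          abs_of_neg (show u i < 0 from hneg l hlM i), neg_neg]
      have hcv : ((fun s => -Real.sqrt s) ∘ fun i => v i ^ 2) = v := by
        funext i
        simp only [Function.comp_apply, Real.sqrt_sq_eq_abs,
          abs_of_neg (show v i < 0 from hneg m hmM i), neg_neg]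
      rwa [hcu, hcv] at h
    haveI : IsAntisymm ℝ (· ≥ ·) := ⟨fun a b h1 h2 => le_antisymm h2 h1⟩
    have hsu : (List.ofFn u).Pairwise (· ≥ ·) := by
      rw [List.pairwise_ofFn]
      intro i j hij
      exact hanti l hl i j hij.le
    have hsv : (List.ofFn v).Pairwise (· ≥ ·) := by
      rw [List.pairwise_ofFn]
      intro i j hij
      exact hanti m hm i j hij.le
    have hl' : List.ofFn u = List.ofFn v := hperm2.eq_of_pairwise' hsu hsv
    have huv : u = v := by
      have := List.ofFn_injective hl'
      exact this
    funext i
    have h := congrFun huv i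
    simp only [hu, hv, shiftl] at h
    have : (l i : ℝ) = (m i : ℝ) := by linarith
    exact_mod_cast this
  -- build the characteristic polynomials of the square multisets
  set F : (Fin n → ℝ) → Polynomial ℝ :=
    fun w => ((↑(List.ofFn (fun i => w i ^ 2)) : Multiset ℝ).map
      (fun a => Polynomial.X - Polynomial.C a)).prod with hF
  have hfg : F u ≠ F v := by
    intro h
    apply hST
    have h2 := congrArg Polynomial.roots h
    rwa [Polynomial.roots_multiset_prod_X_sub_C, Polynomial.roots_multiset_prod_X_sub_C] at h2
  obtain ⟨t₀, ht₀⟩ : ∃ t, (F u).eval t ≠ (F v).eval t := by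
    by_contra h
    push_neg at h
    exact hfg (Polynomial.funext h)
  -- evaluation of F
  have hFeval : ∀ (w : Fin n → ℝ) (t : ℝ),
      (F w).eval t = ∏ i : Fin n, (t - w i ^ 2) := by
    intro w t
    rw [hF]
    rw [Polynomial.eval_multiset_prod, Multiset.map_coe, Multiset.map_coe,
      Multiset.prod_coe, List.map_ofFn, List.map_ofFn, List.prod_ofFn]
    simp [Function.comp]
  -- the separating polynomial
  refine ⟨∏ i : Fin n, (MvPolynomial.X i ^ 2 - MvPolynomial.C t₀), ?_, ?_, ?_⟩
  · intro σ
    rw [map_prod]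
    simp only [map_sub, map_pow, rename_X, rename_C]
    exact Equiv.prod_comp σ (fun i => MvPolynomial.X i ^ 2 - MvPolynomial.C t₀)
  · intro ε hε x
    rw [map_prod, map_prod]
    refine Finset.prod_congr rfl fun i _ => ?_
    simp only [map_sub, map_pow, eval_X, eval_C]
    rcases hε i with h | h <;> rw [h] <;> ring
  · have hevalp : ∀ y : Fin n → ℝ,
        MvPolynomial.eval y (∏ i : Fin n, (MvPolynomial.X i ^ 2 - MvPolynomial.C t₀))
          = ∏ i : Fin n, (y i ^ 2 - t₀) := by
      intro y
      rw [map_prod]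
      simp
    rw [hevalp, hevalp]
    intro h
    apply ht₀
    rw [hFeval, hFeval]
    have key : ∀ w : Fin n → ℝ,
        ∏ i : Fin n, (t₀ - w i ^ 2) = (-1) ^ n * ∏ i : Fin n, (w i ^ 2 - t₀) := by
      intro w
      have h1 : ∀ i : Fin n, t₀ - w i ^ 2 = (-1) * (w i ^ 2 - t₀) := fun i => by ring
      rw [Finset.prod_congr rfl (fun i _ => h1 i), Finset.prod_mul_distrib,
        Finset.prod_const, Finset.card_univ, Fintype.card_fin]
    rw [key, key, h]

end MVB
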